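/- Let π be a Borel probability measure on ℙ(V), and let η > 0 and C > 0 be such that ∫_{ℙ(V)} δ(x,y)^{−η} π(dx) ≤ C for every y ∈ ℙ(V*). Let A > 0 with η·A ≥ 4, and for n ≥ 2 set M_n = ⌊A log² n⌋. Then there exists a constant c > 0, depending only on η and C, such that for every integer n ≥ 2, every y ∈ ℙ(V*) and every nonnegative bounded Borel function φ on ℙ(V): Σ_{k=0}^{M_n} (k−1)·a_n·π(φ_{n,k}^y) ≥ −d_φ(y) − 2·a_n·π(φ) − c·‖φ‖_∞/n², where d_φ(y) := ∫_{ℙ(V)} φ(x) log δ(x,y) π(dx), π(ψ) := ∫ ψ dπ and ‖φ‖_∞ = sup_x |φ(x)|. -/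

import Mathlib

open MeasureTheory Real Filter
open scoped InnerProductSpace ENNReal Topology

noncomputable section

abbrev V (d : ℕ) := EuclideanSpace ℝ (Fin d)
abbrev PV (d : ℕ) := Projectivization ℝ (V d)

/-- `δ(x,y) = |⟨f,v⟩| / (‖f‖‖v‖)` for `x = ℝv ∈ ℙ(V)` and `y = ℝf ∈ ℙ(V*)`, where the
dual space `V*` is identified with `V = ℝ^d` via the Euclidean inner product. -/
def delta (d : ℕ) (x y : PV d) : ℝ := |⟪y.rep, x.rep⟫_ℝ| / (‖y.rep‖ * ‖x.rep‖)

/-- The angular distance `d(x,x') = ‖v ∧ v'‖/(‖v‖‖v'‖)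
  = sqrt(‖v‖²‖v'‖² − ⟨v,v'⟩²)/(‖v‖‖v'‖)` on the projective space. -/
def angDist (d : ℕ) (x x' : PV d) : ℝ :=
  Real.sqrt (‖x.rep‖ ^ 2 * ‖x'.rep‖ ^ 2 - ⟪x.rep, x'.rep⟫_ℝ ^ 2) / (‖x.rep‖ * ‖x'.rep‖)

instance (d : ℕ) : MeasurableSpace (PV d) :=
  @Quotient.instMeasurableSpace _ (projectivizationSetoid ℝ (V d)) _
instance (d : ℕ) : TopologicalSpace (PV d) :=
  @instTopologicalSpaceQuotient _ (projectivizationSetoid ℝ (V d)) _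

/-- The uniform distribution function `U(t) = min(max(t,0),1)` on `[0,1]`. -/
def Ufun (t : ℝ) : ℝ := min (max t 0) 1

/-- `a_n = 1 / log n`. -/
def an (n : ℕ) : ℝ := 1 / Real.log n

/-- `U_{n,k}(t) = U((t − (k−1)a_n)/a_n)`. -/
def Unk (n k : ℕ) (t : ℝ) : ℝ := Ufun ((t - ((k : ℝ) - 1) * an n) / an n)

/-- `h_{n,k} = U_{n,k} − U_{n,k+1}`. -/
def hnk (n k : ℕ) (t : ℝ) : ℝ := Unk n k t - Unk n (k + 1) t

open Classical in
/-- `χ_{n,k}^y(x) = h_{n,k}(−log δ(x,y))`, with the convention `log 0 = −∞`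
(so that `χ_{n,k}^y(x) = 0` when `δ(x,y) = 0`). -/
def chi (d n k : ℕ) (y x : PV d) : ℝ :=
  if delta d x y = 0 then 0 else hnk n k (-Real.log (delta d x y))

open Classical in
/-- `χ̄_{n,k}^y(x) = U_{n,k}(−log δ(x,y))`, with the convention `log 0 = −∞`
(so that `χ̄_{n,k}^y(x) = 1` when `δ(x,y) = 0`). -/
def chibar (d n k : ℕ) (y x : PV d) : ℝ :=
  if delta d x y = 0 then 1 else Unk n k (-Real.log (delta d x y))

/-- `M_n = ⌊A log² n⌋`. -/
def Mn (A : ℝ) (n : ℕ) : ℕ := Nat.floor (A * Real.log n ^ 2)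

open Classical in
/-- `φ_{n,k}^y = φ·χ_{n,k}^y` for `0 ≤ k ≤ M_n − 1` and `φ_{n,M_n}^y = φ·χ̄_{n,M_n}^y`. -/
def phiNK (d : ℕ) (A : ℝ) (n k : ℕ) (y : PV d) (φ : PV d → ℝ) (x : PV d) : ℝ :=
  φ x * (if k = Mn A n then chibar d n k y x else chi d n k y x)

/-- Sup norm `‖φ‖_∞` of a function on the projective space. -/
def supNorm (d : ℕ) (φ : PV d → ℝ) : ℝ := ⨆ x, |φ x|
/-! ### Auxiliary lemmas -/

lemma Ufun_nonneg (t : ℝ) : 0 ≤ Ufun t := le_min (le_max_right _ _) zero_le_one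

lemma Ufun_le_one (t : ℝ) : Ufun t ≤ 1 := min_le_right _ _

lemma Ufun_mono {s t : ℝ} (h : s ≤ t) : Ufun s ≤ Ufun t :=
  min_le_min (max_le_max h le_rfl) le_rfl

lemma Ufun_eq_one {s : ℝ} (h : 1 ≤ s) : Ufun s = 1 :=
  min_eq_right (le_max_of_le_left h)

lemma Ufun_eq_zero {s : ℝ} (h : s ≤ 0) : Ufun s = 0 := by
  unfold Ufun
  rw [max_eq_right h, min_eq_left zero_le_one]

lemma an_pos {n : ℕ} (hn : 2 ≤ n) : 0 < an n := by
  have h1 : (1 : ℝ) < n := by exact_mod_cast Nat.lt_of_lt_of_le one_lt_two hn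
  have := Real.log_pos h1
  unfold an; positivity

lemma continuous_Ufun : Continuous Ufun := by
  unfold Ufun; fun_prop

lemma continuous_Unk (n k : ℕ) : Continuous (Unk n k) := by
  unfold Unk
  exact continuous_Ufun.comp (by fun_prop)

lemma continuous_hnk (n k : ℕ) : Continuous (hnk n k) := by
  unfold hnk
  exact (continuous_Unk n k).sub (continuous_Unk n (k + 1))

lemma delta_nonneg (d : ℕ) (x y : PV d) : 0 ≤ delta d x y :=
  div_nonneg (abs_nonneg _) (mul_nonneg (norm_nonneg _) (norm_nonneg _))

lemma delta_le_one (d : ℕ) (x y : PV d) : delta d x y ≤ 1 :=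
  div_le_one_of_le₀ (abs_real_inner_le_norm _ _)
    (mul_nonneg (norm_nonneg _) (norm_nonneg _))

lemma delta_mk (d : ℕ) (y : PV d) (v : V d) (hv : v ≠ 0) :
    delta d (Projectivization.mk ℝ v hv) y = |⟪y.rep, v⟫_ℝ| / (‖y.rep‖ * ‖v‖) := by
  set x := Projectivization.mk ℝ v hv with hx
  have hrep : Projectivization.mk ℝ x.rep x.rep_nonzero = Projectivization.mk ℝ v hv := by
    rw [Projectivization.mk_rep]
  obtain ⟨a, ha⟩ := (Projectivization.mk_eq_mk_iff ℝ _ _ x.rep_nonzero hv).1 hrep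
  have h1 : ⟪y.rep, x.rep⟫_ℝ = (a : ℝ) * ⟪y.rep, v⟫_ℝ := by
    rw [← ha, Units.smul_def, real_inner_smul_right]
  have h2 : ‖x.rep‖ = |(a : ℝ)| * ‖v‖ := by
    rw [← ha, Units.smul_def, norm_smul, Real.norm_eq_abs]
  have ha0 : |(a : ℝ)| ≠ 0 := by
    simpa using a.ne_zero
  unfold delta
  rw [h1, h2, abs_mul,
    show ‖Projectivization.rep y‖ * (|(a : ℝ)| * ‖v‖)
        = |(a : ℝ)| * (‖Projectivization.rep y‖ * ‖v‖) by ring,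
    mul_div_mul_left _ _ ha0]

lemma measurable_delta (d : ℕ) (y : PV d) : Measurable (fun x : PV d => delta d x y) := by
  have hg : Measurable (fun v : V d => |⟪y.rep, v⟫_ℝ| / (‖y.rep‖ * ‖v‖)) := by
    have h1 : Continuous (fun v : V d => |⟪y.rep, v⟫_ℝ|) :=
      (continuous_const.inner continuous_id).abs
    exact h1.measurable.div (measurable_const.mul measurable_norm)
  have : Measurable ((fun x : PV d => delta d x y) ∘
      (Quotient.mk'' : {v : V d // v ≠ 0} → PV d)) := by
    have heq : ((fun x : PV d => delta d x y) ∘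
        (Quotient.mk'' : {v : V d // v ≠ 0} → PV d)) =
        fun p : {v : V d // v ≠ 0} => |⟪y.rep, (p : V d)⟫_ℝ| / (‖y.rep‖ * ‖(p : V d)‖) := by
      funext p
      exact delta_mk d y p.1 p.2
    rw [heq]
    exact hg.comp measurable_subtype_coe
  exact measurable_from_quotient.2 this

lemma keyIneq (n : ℕ) (hn : 2 ≤ n) (M : ℕ) (η t : ℝ) (hη : 0 < η) (ht : 0 ≤ t) :
    t - 2 * an n - (2 / η * Real.exp (-(η * (((M : ℝ) - 1) * an n)) / 2)) * Real.exp (η * t)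
      ≤ ∑ k ∈ Finset.range (M + 1),
          (((k : ℝ) - 1) * an n * (if k = M then Unk n k t else hnk n k t)) := by
  have ha : 0 < an n := an_pos hn
  rw [Finset.sum_range_succ, if_pos rfl]
  rw [Finset.sum_congr rfl (fun k hk => by
    rw [if_neg (Finset.mem_range.1 hk).ne] :
    ∀ k ∈ Finset.range M, ((k : ℝ) - 1) * an n * (if k = M then Unk n k t else hnk n k t)
      = ((k : ℝ) - 1) * an n * hnk n k t)]
  -- telescoping
  have htel : ∑ k ∈ Finset.range M, hnk n k t = 1 - Unk n M t := by
    have h0 : Unk n 0 t = 1 := by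
      apply Ufun_eq_one
      rw [le_div_iff₀ ha]
      push_cast
      linarith
    have := Finset.sum_range_sub' (fun k => Unk n k t) M
    simp only [hnk]
    rw [this, h0]
  -- each term
  have hterm : ∀ k ∈ Finset.range M,
      (t - 2 * an n) * hnk n k t ≤ ((k : ℝ) - 1) * an n * hnk n k t := by
    intro k _
    have hmono : Unk n (k + 1) t ≤ Unk n k t := by
      apply Ufun_mono
      apply div_le_div_of_nonneg_right ?_ ha.le
      push_cast
      nlinarith
    have hh : 0 ≤ hnk n k t := sub_nonneg.2 hmono
    rcases lt_or_ge t (((k : ℝ) + 1) * an n) with hcase | hcase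
    · exact mul_le_mul_of_nonneg_right (by nlinarith) hh
    · have h1 : Unk n k t = 1 := by
        apply Ufun_eq_one; rw [le_div_iff₀ ha]; nlinarith
      have h2 : Unk n (k + 1) t = 1 := by
        apply Ufun_eq_one; rw [le_div_iff₀ ha]; push_cast; nlinarith
      have h3 : hnk n k t = 0 := by
        rw [show hnk n k t = Unk n k t - Unk n (k + 1) t from rfl, h1, h2]; ring
      rw [h3]; simp
  have hsum := Finset.sum_le_sum hterm
  rw [← Finset.mul_sum, htel] at hsum
  -- error bound
  have hU0 : 0 ≤ Unk n M t := Ufun_nonneg _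
  have hU1 : Unk n M t ≤ 1 := Ufun_le_one _
  have herr : Unk n M t * (t - ((M : ℝ) + 1) * an n)
      ≤ (2 / η * Real.exp (-(η * (((M : ℝ) - 1) * an n)) / 2)) * Real.exp (η * t) := by
    rcases le_or_gt t (((M : ℝ) - 1) * an n) with hc | hc
    · have hz : Unk n M t = 0 := by
        apply Ufun_eq_zero
        apply div_nonpos_of_nonpos_of_nonneg (by linarith) ha.le
      rw [hz, zero_mul]
      positivity
    · have h1 : Unk n M t * (t - ((M : ℝ) + 1) * an n) ≤ t := by
        have hMa : 0 ≤ ((M : ℝ) + 1) * an n := by positivity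
        nlinarith [mul_nonneg (sub_nonneg.2 hU1) ht, mul_nonneg hU0 hMa]
      have h2 : t ≤ 2 / η * Real.exp (η * t / 2) := by
        have he := Real.add_one_le_exp (η * t / 2)
        have : η * t / 2 ≤ Real.exp (η * t / 2) := by linarith
        calc t = 2 / η * (η * t / 2) := by field_simp
          _ ≤ 2 / η * Real.exp (η * t / 2) :=
              mul_le_mul_of_nonneg_left this (by positivity)
      have h3 : Real.exp (η * t / 2)
          ≤ Real.exp (-(η * (((M : ℝ) - 1) * an n)) / 2 + η * t) := by
        apply Real.exp_le_exp.2
        nlinarith [mul_le_mul_of_nonneg_left hc.le hη.le]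
      calc Unk n M t * (t - ((M : ℝ) + 1) * an n) ≤ t := h1
        _ ≤ 2 / η * Real.exp (η * t / 2) := h2
        _ ≤ 2 / η * Real.exp (-(η * (((M : ℝ) - 1) * an n)) / 2 + η * t) :=
            mul_le_mul_of_nonneg_left h3 (by positivity)
        _ = (2 / η * Real.exp (-(η * (((M : ℝ) - 1) * an n)) / 2)) * Real.exp (η * t) := by
            rw [Real.exp_add]; ring
  nlinarith [hsum, herr]

lemma Unk_nonneg (n k : ℕ) (t : ℝ) : 0 ≤ Unk n k t := Ufun_nonneg _

lemma Unk_le_one (n k : ℕ) (t : ℝ) : Unk n k t ≤ 1 := Ufun_le_one _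

lemma abs_hnk_le (n k : ℕ) (t : ℝ) : |hnk n k t| ≤ 1 := by
  simp only [hnk]
  exact abs_le.2 ⟨by linarith [Unk_le_one n (k + 1) t, Unk_nonneg n k t],
    by linarith [Unk_le_one n k t, Unk_nonneg n (k + 1) t]⟩

lemma measurable_chi (d n k : ℕ) (y : PV d) : Measurable (fun x => chi d n k y x) := by
  unfold chi
  exact Measurable.ite ((measurable_delta d y) (measurableSet_singleton 0)) measurable_const
    ((continuous_hnk n k).measurable.comp ((Real.measurable_log.comp (measurable_delta d y)).neg))

lemma measurable_chibar (d n k : ℕ) (y : PV d) : Measurable (fun x => chibar d n k y x) := by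
  unfold chibar
  exact Measurable.ite ((measurable_delta d y) (measurableSet_singleton 0)) measurable_const
    ((continuous_Unk n k).measurable.comp ((Real.measurable_log.comp (measurable_delta d y)).neg))

lemma abs_chi_le (d n k : ℕ) (y x : PV d) : |chi d n k y x| ≤ 1 := by
  unfold chi
  split
  · simp
  · exact abs_hnk_le n k _

lemma abs_chibar_le (d n k : ℕ) (y x : PV d) : |chibar d n k y x| ≤ 1 := by
  unfold chibar
  split
  · simp
  · exact abs_le.2 ⟨by linarith [Unk_nonneg n k (-Real.log (delta d x y))], Unk_le_one n k _⟩

/-- Lower bound of Lemma 3.8 (Xiao–Grama–Liu): there is `c > 0` depending only on `η`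
and `C` such that
`Σ_{k=0}^{M_n} (k−1) a_n pr(φ_{n,k}^y) ≥ −d_φ(y) − 2 a_n pr(φ) − c‖φ‖_∞/n²`. -/
theorem partition_sum_lower
    (d : ℕ) (hd : 1 ≤ d) (η C : ℝ) (hη : 0 < η) (hC : 0 < C) :
    ∃ c > (0 : ℝ),
      ∀ (pr : Measure (PV d)), IsProbabilityMeasure pr →
      (∀ y : PV d, ∫⁻ x, ENNReal.ofReal (delta d x y) ^ (-η) ∂pr ≤ ENNReal.ofReal C) →
      ∀ (A : ℝ), 0 < A → η * A ≥ 4 →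
      ∀ (n : ℕ), 2 ≤ n → ∀ (y : PV d),
      ∀ (φ : PV d → ℝ), Measurable φ → (∀ x, 0 ≤ φ x) →
        BddAbove (Set.range fun x => |φ x|) →
        ∑ k ∈ Finset.range (Mn A n + 1),
            ((k : ℝ) - 1) * an n * ∫ x, phiNK d A n k y φ x ∂pr
          ≥ -(∫ x, φ x * Real.log (delta d x y) ∂pr) - 2 * an n * (∫ x, φ x ∂pr)
              - c * supNorm d φ / (n : ℝ) ^ 2 := by
  refine ⟨2 * C / η * Real.exp (2 * η), by positivity, ?_⟩
  intro pr hpr hmom A hA hηA n hn y φ hφm hφ0 hφbdd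
  set c : ℝ := 2 * C / η * Real.exp (2 * η) with hc
  have hn1 : (1 : ℝ) < n := by exact_mod_cast Nat.lt_of_lt_of_le one_lt_two hn
  have hn0 : (0 : ℝ) < n := by linarith
  have hL : 0 < Real.log n := Real.log_pos hn1
  have ha : 0 < an n := an_pos hn
  set M : ℕ := Mn A n with hM
  set B : ℝ := supNorm d φ with hBdef
  have hB : ∀ x, |φ x| ≤ B := fun x => le_ciSup hφbdd x
  have hφB : ∀ x, φ x ≤ B := fun x => (le_abs_self _).trans (hB x)
  have hB0 : 0 ≤ B := (abs_nonneg _).trans (hB y)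
  set Kn : ℝ := 2 / η * Real.exp (-(η * (((M : ℝ) - 1) * an n)) / 2) with hKn
  have hKn0 : 0 < Kn := by rw [hKn]; positivity
  have measD : Measurable (fun x : PV d => delta d x y) := measurable_delta d y
  set W : PV d → ℝ := fun x => Real.exp (η * (-Real.log (delta d x y))) with hW
  have measW : Measurable W := ((Real.measurable_log.comp measD).neg.const_mul η).exp
  have hWpos : ∀ x, 0 < W x := fun x => Real.exp_pos _
  -- a.e. positivity of delta
  have hy := hmom y
  have hfmeas : Measurable (fun x => ENNReal.ofReal (delta d x y) ^ (-η)) :=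
    measD.ennreal_ofReal.pow measurable_const
  have haeD : ∀ᵐ x ∂pr, 0 < delta d x y := by
    have hlt := ae_lt_top hfmeas (lt_of_le_of_lt hy ENNReal.ofReal_lt_top).ne
    filter_upwards [hlt] with x hx
    rcases (delta_nonneg d x y).lt_or_eq with h | h
    · exact h
    · exfalso
      rw [← h, ENNReal.ofReal_zero, ENNReal.zero_rpow_of_neg (neg_lt_zero.mpr hη)] at hx
      exact absurd hx (lt_irrefl ⊤)
  have haeW : ∀ᵐ x ∂pr, ENNReal.ofReal (delta d x y) ^ (-η) = ENNReal.ofReal (W x) := by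
    filter_upwards [haeD] with x hx
    rw [ENNReal.ofReal_rpow_of_pos hx, Real.rpow_def_of_pos hx,
      show Real.log (delta d x y) * (-η) = η * (-Real.log (delta d x y)) by ring]
  have hlintW : ∫⁻ x, ENNReal.ofReal (W x) ∂pr ≤ ENNReal.ofReal C := by
    rw [← lintegral_congr_ae haeW]; exact hy
  have hIW : Integrable W pr := by
    refine ⟨measW.aestronglyMeasurable, ?_⟩
    rw [hasFiniteIntegral_iff_ofReal (ae_of_all _ fun x => (hWpos x).le)]
    exact lt_of_le_of_lt hlintW ENNReal.ofReal_lt_top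
  have hintW : ∫ x, W x ∂pr ≤ C := by
    rw [integral_eq_lintegral_of_nonneg_ae (ae_of_all _ fun x => (hWpos x).le)
      measW.aestronglyMeasurable]
    exact ENNReal.toReal_le_of_le_ofReal hC.le hlintW
  -- integrability
  have hIφ : Integrable φ pr :=
    Integrable.mono' (integrable_const B) hφm.aestronglyMeasurable
      (ae_of_all _ fun x => by rw [Real.norm_eq_abs]; exact hB x)
  have hIφW : Integrable (fun x => φ x * W x) pr := by
    refine Integrable.mono' (hIW.const_mul B) (hφm.mul measW).aestronglyMeasurable
      (ae_of_all _ fun x => ?_)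
    rw [Real.norm_eq_abs, abs_mul, abs_of_pos (hWpos x)]
    exact mul_le_mul_of_nonneg_right (hB x) (hWpos x).le
  have hIφlog : Integrable (fun x => φ x * Real.log (delta d x y)) pr := by
    refine Integrable.mono' ((hIW.const_mul (1 / η)).const_mul B)
      (hφm.mul (Real.measurable_log.comp measD)).aestronglyMeasurable ?_
    filter_upwards [haeD] with x hx
    rw [Real.norm_eq_abs, abs_mul]
    have hlog : |Real.log (delta d x y)| = -Real.log (delta d x y) :=
      abs_of_nonpos (Real.log_nonpos (delta_nonneg d x y) (delta_le_one d x y))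
    have hles : -Real.log (delta d x y) ≤ 1 / η * W x := by
      have h1 : η * (-Real.log (delta d x y)) + 1 ≤ W x := Real.add_one_le_exp _
      have h2 : η * (-Real.log (delta d x y)) ≤ W x := by linarith
      calc -Real.log (delta d x y) = 1 / η * (η * (-Real.log (delta d x y))) := by
            rw [one_div, inv_mul_cancel_left₀ hη.ne']
        _ ≤ 1 / η * W x := mul_le_mul_of_nonneg_left h2 (by positivity)
    rw [hlog]
    calc |φ x| * (-Real.log (delta d x y)) ≤ B * (1 / η * W x) := by
          apply mul_le_mul (hB x) hles ?_ hB0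
          · have := Real.log_nonpos (delta_nonneg d x y) (delta_le_one d x y); linarith
      _ = B * (1 / η * W x) := rfl
  have hIk : ∀ k, Integrable (fun x => phiNK d A n k y φ x) pr := by
    intro k
    have hmeas : Measurable (fun x => phiNK d A n k y φ x) := by
      unfold phiNK
      exact hφm.mul (by split <;> [exact measurable_chibar d n k y;
        exact measurable_chi d n k y])
    refine Integrable.mono' (integrable_const B) hmeas.aestronglyMeasurable
      (ae_of_all _ fun x => ?_)
    rw [Real.norm_eq_abs]
    unfold phiNK
    rw [abs_mul]
    calc |φ x| * |if k = Mn A n then chibar d n k y x else chi d n k y x|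
        ≤ B * 1 := mul_le_mul (hB x)
          (by split <;> [exact abs_chibar_le d n k y x; exact abs_chi_le d n k y x])
          (abs_nonneg _) hB0
      _ = B := mul_one B
  -- rewrite LHS as an integral
  have hLHS : ∑ k ∈ Finset.range (M + 1), ((k : ℝ) - 1) * an n * ∫ x, phiNK d A n k y φ x ∂pr
      = ∫ x, ∑ k ∈ Finset.range (M + 1), ((k : ℝ) - 1) * an n * phiNK d A n k y φ x ∂pr := by
    rw [integral_finset_sum _ (fun k _ => (hIk k).const_mul _)]
    exact Finset.sum_congr rfl fun k _ => (integral_const_mul _ _).symm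
  -- pointwise a.e. inequality
  have hptwise : ∀ᵐ x ∂pr,
      -(φ x * Real.log (delta d x y)) - 2 * an n * φ x - Kn * (φ x * W x)
        ≤ ∑ k ∈ Finset.range (M + 1), ((k : ℝ) - 1) * an n * phiNK d A n k y φ x := by
    filter_upwards [haeD] with x hx
    set t : ℝ := -Real.log (delta d x y) with htdef
    have ht : 0 ≤ t := by
      rw [htdef]
      have := Real.log_nonpos (delta_nonneg d x y) (delta_le_one d x y)
      linarith
    have hsum : ∑ k ∈ Finset.range (M + 1), ((k : ℝ) - 1) * an n * phiNK d A n k y φ x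
        = φ x * ∑ k ∈ Finset.range (M + 1),
            (((k : ℝ) - 1) * an n * (if k = M then Unk n k t else hnk n k t)) := by
      rw [Finset.mul_sum]
      refine Finset.sum_congr rfl fun k _ => ?_
      unfold phiNK chi chibar
      by_cases hkM : k = M
      · rw [if_pos (hM ▸ hkM), if_pos hkM, if_neg hx.ne', ← htdef]; ring
      · rw [if_neg (hM ▸ hkM), if_neg hkM, if_neg hx.ne', ← htdef]; ring
    have hkey := keyIneq n hn M η t hη ht
    have hmul := mul_le_mul_of_nonneg_left hkey (hφ0 x)
    rw [hsum]
    have hWt : W x = Real.exp (η * t) := rfl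
    calc -(φ x * Real.log (delta d x y)) - 2 * an n * φ x - Kn * (φ x * W x)
        = φ x * (t - 2 * an n
            - (2 / η * Real.exp (-(η * (((M : ℝ) - 1) * an n)) / 2)) * Real.exp (η * t)) := by
          rw [hWt, hKn]; ring
      _ ≤ _ := hmul
  have hIS : Integrable
      (fun x => ∑ k ∈ Finset.range (M + 1), ((k : ℝ) - 1) * an n * phiNK d A n k y φ x) pr :=
    integrable_finset_sum _ (fun k _ => (hIk k).const_mul _)
  have hIRHS : Integrable
      (fun x => -(φ x * Real.log (delta d x y)) - 2 * an n * φ x - Kn * (φ x * W x)) pr :=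
    ((hIφlog.neg).sub (hIφ.const_mul (2 * an n))).sub (hIφW.const_mul Kn)
  have hmain := integral_mono_ae hIRHS hIS hptwise
  have hIneg : Integrable (fun x => -(φ x * Real.log (delta d x y))) pr := hIφlog.neg
  have hI1 : Integrable (fun x => -(φ x * Real.log (delta d x y)) - 2 * an n * φ x) pr :=
    hIneg.sub (hIφ.const_mul (2 * an n))
  rw [integral_sub hI1 (hIφW.const_mul Kn),
    integral_sub hIneg (hIφ.const_mul (2 * an n)), integral_neg,
    integral_const_mul, integral_const_mul] at hmain
  rw [ge_iff_le, hLHS]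
  -- final constant estimate
  have hMlb : A * Real.log n ^ 2 - 1 ≤ (M : ℝ) := by
    have := Nat.lt_floor_add_one (A * Real.log n ^ 2)
    rw [hM]
    unfold Mn
    push_cast
    linarith
  have hL2 : 1 / 2 < Real.log n := by
    have h1 : Real.log 2 ≤ Real.log n := Real.log_le_log (by norm_num) (by exact_mod_cast hn)
    linarith [Real.log_two_gt_d9]
  have key2 : 2 * Real.log n - 2 * η ≤ η * (((M : ℝ) - 1) * an n) / 2 := by
    set L : ℝ := Real.log n with hLdef
    have haL : an n = 1 / L := rfl
    have hstep : (2 * L - 2 * η) * (2 * L) ≤ η * ((M : ℝ) - 1) := by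
      nlinarith [mul_nonneg (by linarith : (0 : ℝ) ≤ η * A - 4) (sq_nonneg L),
        mul_le_mul_of_nonneg_left (by linarith : A * L ^ 2 - 2 ≤ (M : ℝ) - 1) hη.le]
    calc 2 * L - 2 * η = (2 * L - 2 * η) * (2 * L) / (2 * L) := by field_simp
      _ ≤ η * ((M : ℝ) - 1) / (2 * L) := by
          apply div_le_div_of_nonneg_right hstep (by positivity)
          -- note: argument order; adjust if needed
      _ = η * (((M : ℝ) - 1) * an n) / 2 := by rw [haL]; ring
  have hexp : Real.exp (-(η * (((M : ℝ) - 1) * an n)) / 2) ≤ Real.exp (2 * η) / (n : ℝ) ^ 2 := by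
    have hn2 : ((n : ℝ)) ^ 2 = Real.exp (2 * Real.log n) := by
      rw [show (2 : ℝ) * Real.log n = Real.log n + Real.log n by ring, Real.exp_add,
        Real.exp_log hn0]
      ring
    rw [hn2, ← Real.exp_sub]
    apply Real.exp_le_exp.2
    linarith
  have hKnC : Kn * C ≤ c / (n : ℝ) ^ 2 := by
    have h1 : Kn * C = (2 * C / η) * Real.exp (-(η * (((M : ℝ) - 1) * an n)) / 2) := by
      rw [hKn]; ring
    rw [h1, hc]
    calc (2 * C / η) * Real.exp (-(η * (((M : ℝ) - 1) * an n)) / 2)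
        ≤ (2 * C / η) * (Real.exp (2 * η) / (n : ℝ) ^ 2) :=
          mul_le_mul_of_nonneg_left hexp (by positivity)
      _ = 2 * C / η * Real.exp (2 * η) / (n : ℝ) ^ 2 := by ring
  have hφWC : ∫ x, φ x * W x ∂pr ≤ B * C := by
    have h1 : ∫ x, φ x * W x ∂pr ≤ ∫ x, B * W x ∂pr := by
      apply integral_mono hIφW (hIW.const_mul B)
      intro x
      exact mul_le_mul_of_nonneg_right (hφB x) (hWpos x).le
    rw [integral_const_mul] at h1
    calc ∫ x, φ x * W x ∂pr ≤ B * ∫ x, W x ∂pr := h1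
      _ ≤ B * C := mul_le_mul_of_nonneg_left hintW hB0
  have hfin : Kn * ∫ x, φ x * W x ∂pr ≤ c * B / (n : ℝ) ^ 2 := by
    calc Kn * ∫ x, φ x * W x ∂pr ≤ Kn * (B * C) :=
          mul_le_mul_of_nonneg_left hφWC hKn0.le
      _ = (Kn * C) * B := by ring
      _ ≤ (c / (n : ℝ) ^ 2) * B := mul_le_mul_of_nonneg_right hKnC hB0
      _ = c * B / (n : ℝ) ^ 2 := by ring
  linarith [hmain, hfin]
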